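/- Let n ≥ 3, c > 0, η = (n/(n−1))^{1/2}, and let R be analytic near 0 with R'(0) = … = R^{(n−2)}(0) = 0 and R^{(n−1)}(0)/(n−1)! = c, and R(0) = 0. Then for all sufficiently small ε > 0, the winding of F(w) = R(w) + ε/w − conj(w) along the circle |w| = η√ε equals −1. -/

import Mathlib

/-- `hasWinding h a b w` : the continuous function `h : [a,b] → ℂ` admits a continuous
argument lift `θ` and `w = (θ b - θ a)/(2π)` is its winding. -/
def hasWinding (h : ℝ → ℂ) (a b : ℝ) (w : ℝ) : Prop :=
  ∃ θ : ℝ → ℝ, ContinuousOn θ (Set.Icc a b) ∧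
    (∀ t ∈ Set.Icc a b, h t = (‖h t‖ : ℂ) * Complex.exp ((θ t : ℂ) * Complex.I)) ∧
    w = (θ b - θ a) / (2 * Real.pi)

/-- Any interval of length at least `π` contains a zero of cosine. -/
lemma exists_cos_zero_between (a b : ℝ) (hab : a + Real.pi ≤ b) :
    ∃ x, a ≤ x ∧ x ≤ b ∧ Real.cos x = 0 := by
  have hπ : (0:ℝ) < Real.pi := Real.pi_pos
  refine ⟨Real.pi/2 + ⌈(a - Real.pi/2)/Real.pi⌉ * Real.pi, ?_, ?_, ?_⟩
  · have h1 : (a - Real.pi/2)/Real.pi ≤ (⌈(a - Real.pi/2)/Real.pi⌉ : ℝ) := Int.le_ceil _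
    have h2 := (div_le_iff₀ hπ).mp h1
    linarith
  · have h1 : (⌈(a - Real.pi/2)/Real.pi⌉ : ℝ) < (a - Real.pi/2)/Real.pi + 1 :=
      Int.ceil_lt_add_one _
    have h2 : (⌈(a - Real.pi/2)/Real.pi⌉ : ℝ) * Real.pi <
        ((a - Real.pi/2)/Real.pi + 1) * Real.pi := mul_lt_mul_of_pos_right h1 hπ
    rw [add_mul, div_mul_cancel₀ _ hπ.ne'] at h2
    linarith
  · rw [Real.cos_add, Real.cos_pi_div_two, Real.sin_pi_div_two, Real.sin_int_mul_pi]
    ring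

/-- If `R` is analytic near `0` with `R(0) = 0`, `R'(0) = … = R^{(n-2)}(0) = 0` and
`R^{(n-1)}(0)/(n-1)! = c > 0`, `n ≥ 3`, then for all sufficiently small `ε > 0`, the
winding of `F(w) = R(w) + ε/w − conj w` along the circle `|w| = η√ε`
(with `η = √(n/(n-1))`) equals `−1`. -/
theorem winding_of_F_on_outer_circle (n : ℕ) (hn : 3 ≤ n) (c : ℝ) (hc : 0 < c)
    (R : ℂ → ℂ) (hR : AnalyticAt ℂ R 0) (hR0 : R 0 = 0)
    (hders : ∀ k : ℕ, 1 ≤ k → k ≤ n - 2 → iteratedDeriv k R 0 = 0)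
    (hcder : iteratedDeriv (n - 1) R 0 = ((n - 1).factorial : ℂ) * (c : ℂ)) :
    ∃ ε₀ > 0, ∀ ε : ℝ, 0 < ε → ε < ε₀ →
      ∀ w : ℝ, hasWinding
        (fun t => R ((Real.sqrt ((n : ℝ) / ((n : ℝ) - 1)) * Real.sqrt ε : ℝ) *
            Complex.exp ((t : ℂ) * Complex.I)) +
          (ε : ℂ) / ((Real.sqrt ((n : ℝ) / ((n : ℝ) - 1)) * Real.sqrt ε : ℝ) *
            Complex.exp ((t : ℂ) * Complex.I)) -
          (starRingEnd ℂ) ((Real.sqrt ((n : ℝ) / ((n : ℝ) - 1)) * Real.sqrt ε : ℝ) *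
            Complex.exp ((t : ℂ) * Complex.I)))
        0 (2 * Real.pi) w →
      w = -1 := by
  have hπ : (0:ℝ) < Real.pi := Real.pi_pos
  have hn3 : (3:ℝ) ≤ (n:ℝ) := by exact_mod_cast hn
  have hn1 : (0:ℝ) < (n:ℝ) - 1 := by linarith
  have hnpos : (0:ℝ) < (n:ℝ) := by linarith
  set η : ℝ := Real.sqrt ((n:ℝ)/((n:ℝ)-1)) with hηdef
  have hηpos : 0 < η := Real.sqrt_pos.mpr (by positivity)
  have hη2 : η^2 = (n:ℝ)/((n:ℝ)-1) := Real.sq_sqrt (by positivity)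
  -- derivative of R at 0 vanishes
  have hd1 : deriv R 0 = 0 := by
    have h1 := hders 1 le_rfl (by omega)
    rwa [iteratedDeriv_one] at h1
  have hder : HasDerivAt R 0 0 := by
    have h1 := hR.differentiableAt.hasDerivAt
    rwa [hd1] at h1
  have hc2n : (0:ℝ) < 1/(2*(n:ℝ)) := by positivity
  have hO := (hasDerivAt_iff_isLittleO.mp hder).def hc2n
  simp only [hR0, sub_zero, smul_zero] at hO
  rw [Metric.eventually_nhds_iff] at hO
  obtain ⟨δ, hδpos, hδ⟩ := hO
  refine ⟨(δ/η)^2, by positivity, ?_⟩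
  intro ε hε hεδ w hw
  set r : ℝ := η * Real.sqrt ε with hrdef
  have hsε : 0 < Real.sqrt ε := Real.sqrt_pos.mpr hε
  have hrpos : 0 < r := by positivity
  have hr2 : r^2 = (n:ℝ)/((n:ℝ)-1) * ε := by
    rw [hrdef, mul_pow, hη2, Real.sq_sqrt hε.le]
  have hrδ : r < δ := by
    have h1 : Real.sqrt ε < δ/η := by
      have h2 := Real.sqrt_lt_sqrt hε.le hεδ
      rwa [Real.sqrt_sq (by positivity)] at h2
    calc r = η * Real.sqrt ε := rfl
      _ < η * (δ/η) := mul_lt_mul_of_pos_left h1 hηpos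
      _ = δ := by field_simp
  -- the function on the circle
  set F : ℝ → ℂ := fun t => R ((r:ℂ) * Complex.exp ((t:ℂ) * Complex.I)) +
      (ε : ℂ) / ((r:ℂ) * Complex.exp ((t:ℂ) * Complex.I)) -
      (starRingEnd ℂ) ((r:ℂ) * Complex.exp ((t:ℂ) * Complex.I)) with hFdef
  -- arithmetic: ε/r - r = -(r/n)
  have hr2' : r^2 * ((n:ℝ)-1) = (n:ℝ) * ε := by
    rw [hr2]; field_simp
  have harith : ε/r - r = -(r/(n:ℝ)) := by
    field_simp
    nlinarith [hr2']
  -- the key pointwise estimate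
  have hre : ∀ t : ℝ, (Complex.exp ((t:ℂ) * Complex.I) * F t).re < 0 := by
    intro t
    set E : ℂ := Complex.exp ((t:ℂ) * Complex.I) with hEdef
    have hEabs : ‖E‖ = 1 := Complex.norm_exp_ofReal_mul_I t
    have hEne : E ≠ 0 := Complex.exp_ne_zero _
    have hrne : ((r:ℝ):ℂ) ≠ 0 := by
      simpa using hrpos.ne'
    have habsz : ‖(r:ℂ) * E‖ = r := by
      rw [norm_mul, hEabs, Complex.norm_real, Real.norm_eq_abs, abs_of_pos hrpos, mul_one]
    have hdz : dist ((r:ℂ) * E) 0 < δ := by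
      rw [dist_zero_right, habsz]; exact hrδ
    have hRb : ‖R ((r:ℂ) * E)‖ ≤ 1/(2*(n:ℝ)) * r := by
      have h1 := hδ hdz
      rw [habsz] at h1
      exact h1
    have hEconj : E * (starRingEnd ℂ) E = 1 := by
      rw [Complex.mul_conj]
      rw [Complex.normSq_eq_norm_sq, hEabs]
      norm_num
    have h1 : E * ((ε:ℂ) / ((r:ℂ) * E)) = (ε:ℂ)/(r:ℂ) := by
      field_simp
    have h2 : E * (starRingEnd ℂ) ((r:ℂ) * E) = (r:ℂ) := by
      rw [map_mul, Complex.conj_ofReal]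
      calc E * ((r:ℂ) * (starRingEnd ℂ) E) = (r:ℂ) * (E * (starRingEnd ℂ) E) := by ring
        _ = (r:ℂ) := by rw [hEconj, mul_one]
    have hexp : E * F t = E * R ((r:ℂ) * E) + ((ε/r - r : ℝ) : ℂ) := by
      rw [hFdef]
      simp only []
      rw [mul_sub, mul_add, h1, h2]
      push_cast
      ring
    have hre1 : (E * F t).re = (E * R ((r:ℂ) * E)).re + (ε/r - r) := by
      rw [hexp, Complex.add_re, Complex.ofReal_re]
    have hre2 : (E * R ((r:ℂ) * E)).re ≤ 1/(2*(n:ℝ)) * r := by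
      refine le_trans (Complex.re_le_norm _) ?_
      rw [norm_mul, hEabs, one_mul]
      exact hRb
    have h5 : 1/(2*(n:ℝ))*r - r/(n:ℝ) = -(r/(2*(n:ℝ))) := by
      field_simp; ring
    have h6 : 0 < r/(2*(n:ℝ)) := by positivity
    rw [hre1, harith]
    linarith
  -- F never vanishes
  have hFne : ∀ t : ℝ, F t ≠ 0 := by
    intro t h0
    have := hre t
    rw [h0, mul_zero, Complex.zero_re] at this
    exact lt_irrefl 0 this
  -- unpack the winding hypothesis
  obtain ⟨θ, hθc, hθeq, hwval⟩ := hw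
  have hθeq' : ∀ t ∈ Set.Icc 0 (2*Real.pi),
      F t = (‖F t‖ : ℂ) * Complex.exp ((θ t : ℂ) * Complex.I) := by
    intro t ht
    exact hθeq t ht
  -- cosine of the shifted lift is negative
  have hcos : ∀ t ∈ Set.Icc 0 (2*Real.pi), Real.cos (θ t + t) < 0 := by
    intro t ht
    have h1 := hre t
    have habs : 0 < ‖F t‖ := norm_pos_iff.mpr (hFne t)
    have h2 : Complex.exp ((t:ℂ) * Complex.I) * F t =
        (‖F t‖ : ℂ) * Complex.exp (((θ t + t : ℝ) : ℂ) * Complex.I) := by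
      conv_lhs => rw [hθeq' t ht]
      calc Complex.exp ((t:ℂ) * Complex.I) *
            ((‖F t‖ : ℂ) * Complex.exp ((θ t : ℂ) * Complex.I))
          = (‖F t‖ : ℂ) *
            (Complex.exp ((θ t : ℂ) * Complex.I) * Complex.exp ((t:ℂ) * Complex.I)) := by
            ring
        _ = (‖F t‖ : ℂ) *
            Complex.exp ((θ t : ℂ) * Complex.I + (t:ℂ) * Complex.I) := by
            rw [Complex.exp_add]
        _ = (‖F t‖ : ℂ) *
            Complex.exp (((θ t + t : ℝ) : ℂ) * Complex.I) := by
            congr 1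
            push_cast
            ring
    rw [h2] at h1
    have h3 : ((‖F t‖ : ℂ) *
        Complex.exp (((θ t + t : ℝ) : ℂ) * Complex.I)).re =
        ‖F t‖ * Real.cos (θ t + t) := by
      rw [Complex.re_ofReal_mul, Complex.exp_ofReal_mul_I_re]
    rw [h3] at h1
    by_contra hcc
    push_neg at hcc
    have := mul_nonneg habs.le hcc
    linarith
  -- periodicity gives an integer winding
  have hmem0 : (0:ℝ) ∈ Set.Icc 0 (2*Real.pi) := by constructor <;> linarith
  have hmem2π : (2*Real.pi) ∈ Set.Icc 0 (2*Real.pi) := by constructor <;> linarith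
  have hFper : F (2*Real.pi) = F 0 := by
    have hE : Complex.exp (((2*Real.pi : ℝ):ℂ) * Complex.I) =
        Complex.exp (((0:ℝ):ℂ) * Complex.I) := by
      push_cast
      rw [Complex.exp_two_pi_mul_I]
      simp
    rw [hFdef]
    simp only []
    rw [hE]
  obtain ⟨k, hk⟩ : ∃ k : ℤ, θ (2*Real.pi) = θ 0 + 2*Real.pi*k := by
    have h1 := hθeq' 0 hmem0
    have h2 := hθeq' (2*Real.pi) hmem2π
    rw [hFper] at h2
    have h3' := h1.symm.trans h2
    have habs : ((‖F 0‖ : ℝ) : ℂ) ≠ 0 := by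
      simp only [ne_eq, Complex.ofReal_eq_zero, norm_eq_zero]
      exact hFne 0
    have h3 : Complex.exp ((θ 0 : ℂ) * Complex.I) =
        Complex.exp ((θ (2*Real.pi) : ℂ) * Complex.I) :=
      mul_left_cancel₀ habs h3'
    rw [Complex.exp_eq_exp_iff_exists_int] at h3
    obtain ⟨m, hm⟩ := h3
    have hm' : ((θ 0 : ℝ) : ℂ) * Complex.I =
        (((θ (2*Real.pi) : ℝ) : ℂ) + (m:ℂ) * (2*(Real.pi:ℂ))) * Complex.I := by
      rw [hm]; ring
    have h4 := mul_right_cancel₀ Complex.I_ne_zero hm'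
    have h5 : θ 0 = θ (2*Real.pi) + (m:ℝ) * (2*Real.pi) := by exact_mod_cast h4
    refine ⟨-m, ?_⟩
    push_cast
    linarith
  -- show k = -1
  have hφc : ContinuousOn (fun t => θ t + t) (Set.Icc 0 (2*Real.pi)) :=
    hθc.add (continuous_id.continuousOn)
  have hkm1 : k = -1 := by
    by_contra hk1
    have hφdiff : (θ (2*Real.pi) + 2*Real.pi) - (θ 0 + 0) = 2*Real.pi*(k+1) := by
      rw [hk]; push_cast; ring
    rcases lt_or_ge k (-1) with hlt | hge
    · -- k ≤ -2 : φ(2π) + π ≤ φ(0)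
      have hk2 : (k:ℝ) ≤ -2 := by
        have : k ≤ -2 := by omega
        exact_mod_cast this
      have hmul : 2*Real.pi*((k:ℝ)+1) ≤ 2*Real.pi*(-1) :=
        mul_le_mul_of_nonneg_left (by linarith) (by positivity)
      have hle : (θ (2*Real.pi) + 2*Real.pi) + Real.pi ≤ θ 0 + 0 := by linarith
      obtain ⟨x, hx1, hx2, hx3⟩ := exists_cos_zero_between _ _ hle
      have hximg : x ∈ (fun t => θ t + t) '' Set.Icc 0 (2*Real.pi) := by
        apply intermediate_value_Icc' (by linarith) hφc
        exact ⟨hx1, hx2⟩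
      obtain ⟨t, ht, hxt⟩ := hximg
      have hxt' : θ t + t = x := hxt
      have := hcos t ht
      rw [hxt', hx3] at this
      exact lt_irrefl 0 this
    · -- k ≥ 0 : φ(0) + π ≤ φ(2π)
      have hge0 : (0:ℤ) ≤ k := by omega
      have hk2 : (0:ℝ) ≤ (k:ℝ) := by exact_mod_cast hge0
      have hmul : 2*Real.pi*(1:ℝ) ≤ 2*Real.pi*((k:ℝ)+1) :=
        mul_le_mul_of_nonneg_left (by linarith) (by positivity)
      have hle : (θ 0 + 0) + Real.pi ≤ θ (2*Real.pi) + 2*Real.pi := by linarith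
      obtain ⟨x, hx1, hx2, hx3⟩ := exists_cos_zero_between _ _ hle
      have hximg : x ∈ (fun t => θ t + t) '' Set.Icc 0 (2*Real.pi) := by
        apply intermediate_value_Icc (by linarith) hφc
        exact ⟨hx1, hx2⟩
      obtain ⟨t, ht, hxt⟩ := hximg
      have hxt' : θ t + t = x := hxt
      have := hcos t ht
      rw [hxt', hx3] at this
      exact lt_irrefl 0 this
  rw [hwval, hk, hkm1]
  push_cast
  rw [show θ 0 + 2*Real.pi*(-1) - θ 0 = -(2*Real.pi) by ring]
  rw [neg_div, div_self (by positivity : (2*Real.pi) ≠ 0)]
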